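/- Balanced binning bound: place 2^k copies of each element of {y₁,…,y_m} ⊆ ℝ into m bins of 2^k elements each so that every bin sum S_j lies in [2^k μ − d, 2^k μ + d], where μ = (1/m)Σ y_j and d = max y_i − min y_j. Then the distortion gap satisfies (1/(2^{2k} m)) Σ_{j=1}^m S_j² − μ² ≤ d²/2^{2k}. -/

import Mathlib

/-- Expectation of `f` under mass function `p` on a finite sample space. -/
noncomputable def pexp {Ω : Type*} [Fintype Ω] (p : Ω → ℝ) (f : Ω → ℝ) : ℝ :=
  ∑ ω, p ω * f ω

/-- Variance of `f` under mass function `p`. -/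
noncomputable def pvar {Ω : Type*} [Fintype Ω] (p : Ω → ℝ) (f : Ω → ℝ) : ℝ :=
  pexp p (fun ω => (f ω - pexp p f) ^ 2)

/-- Minimum mean-squared error of estimating `Y` from the observation `τ`:
the infimum over all estimators `h` of `E[(Y - h(τ))²]`. -/
noncomputable def pmmse {Ω T : Type*} [Fintype Ω] (p : Ω → ℝ) (Y : Ω → ℝ) (τ : Ω → T) : ℝ :=
  sInf {e : ℝ | ∃ h : T → ℝ, e = pexp p (fun ω => (Y ω - h (τ ω)) ^ 2)}

/-- Conditional expectation `E[Y | τ = t]` (with the junk value `0` on null events). -/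
noncomputable def pcond {Ω T : Type*} [Fintype Ω] [DecidableEq T]
    (p : Ω → ℝ) (Y : Ω → ℝ) (τ : Ω → T) (t : T) : ℝ :=
  (∑ ω ∈ Finset.univ.filter (fun ω => τ ω = t), p ω * Y ω) /
    (∑ ω ∈ Finset.univ.filter (fun ω => τ ω = t), p ω)

/-- Balanced binning bound: with `2^k` bijections from values to `m` bins, if each bin sum
lies within `d` of `2^k μ` (where `d` is the diameter of the alphabet), the distortion gap
`(1/(2^{2k} m)) Σ S_j² − μ²` is at most `d²/2^{2k}`. -/
theorem stmt7 (m k : ℕ) (hm : 0 < m) (y : Fin m → ℝ)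
    (a : Fin (2 ^ k) → Equiv.Perm (Fin m)) :
    let μ : ℝ := (∑ j, y j) / m
    let d : ℝ := (Finset.univ.sup' ⟨⟨0, hm⟩, Finset.mem_univ _⟩ y) -
      (Finset.univ.inf' ⟨⟨0, hm⟩, Finset.mem_univ _⟩ y)
    let S : Fin m → ℝ := fun j => ∑ i, y ((a i).symm j)
    (∀ j, 2 ^ k * μ - d ≤ S j ∧ S j ≤ 2 ^ k * μ + d) →
      (1 / ((2 : ℝ) ^ (2 * k) * m)) * ∑ j, S j ^ 2 - μ ^ 2 ≤ d ^ 2 / 2 ^ (2 * k) := by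
  intro μ d S h
  have hmR : (0:ℝ) < m := by exact_mod_cast hm
  have hsum : ∑ j, y j = m * μ := by
    show ∑ j, y j = m * ((∑ j, y j) / m)
    rw [mul_div_assoc', eq_div_iff hmR.ne']; ring
  set c : ℝ := 2 ^ k * μ with hc
  -- sum of bin sums
  have hS : ∑ j, S j = m * c := by
    have : ∑ j, S j = ∑ i : Fin (2^k), ∑ j, y ((a i).symm j) := by
      rw [Finset.sum_comm]
    rw [this]
    have h1 : ∀ i : Fin (2^k), ∑ j, y ((a i).symm j) = ∑ j, y j := fun i =>
      Equiv.sum_comp (a i).symm y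
    simp only [h1, hsum, Finset.sum_const, Finset.card_univ, Fintype.card_fin,
      nsmul_eq_mul, hc]
    push_cast
    ring
  -- bound each deviation
  have hdev : ∀ j, (S j - c) ^ 2 ≤ d ^ 2 := by
    intro j
    obtain ⟨h1, h2⟩ := h j
    have := sq_le_sq' (by linarith : -d ≤ S j - c) (by linarith : S j - c ≤ d)
    simpa using this
  have hsq : ∑ j, S j ^ 2 = ∑ j, (S j - c) ^ 2 + m * c ^ 2 := by
    have : ∑ j, (S j - c) ^ 2 = ∑ j, (S j ^ 2 - 2 * c * S j + c ^ 2) := by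
      apply Finset.sum_congr rfl; intro j _; ring
    rw [this, Finset.sum_add_distrib, Finset.sum_sub_distrib, ← Finset.mul_sum, hS]
    simp [Finset.sum_const, Finset.card_univ]
    ring
  have hbound : ∑ j, (S j - c) ^ 2 ≤ m * d ^ 2 := by
    calc ∑ j, (S j - c) ^ 2 ≤ ∑ _j : Fin m, d ^ 2 := Finset.sum_le_sum fun j _ => hdev j
    _ = m * d ^ 2 := by simp [Finset.sum_const, Finset.card_univ, nsmul_eq_mul]
  have h2k : (0:ℝ) < 2 ^ (2 * k) := by positivity
  have hcsq : c ^ 2 = 2 ^ (2 * k) * μ ^ 2 := by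
    rw [hc, mul_pow, ← pow_mul, two_mul, pow_add]
    ring
  rw [hsq]
  have key : (1 / ((2:ℝ) ^ (2 * k) * m)) * (∑ j, (S j - c) ^ 2 + m * c ^ 2) - μ ^ 2
      = (∑ j, (S j - c) ^ 2) / (2 ^ (2 * k) * m) := by
    rw [hcsq]; field_simp; ring
  rw [key]
  rw [div_le_div_iff₀ (by positivity) h2k]
  calc (∑ j, (S j - c) ^ 2) * 2 ^ (2 * k) ≤ (m * d ^ 2) * 2 ^ (2 * k) := by
        apply mul_le_mul_of_nonneg_right hbound (le_of_lt h2k)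
  _ = d ^ 2 * (2 ^ (2 * k) * m) := by ring
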